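/- arXiv:quant-ph/9906111 — 2 statements merged into one kernel-verified Lean document; each statement's English description precedes it below -/
import Mathlib

section
/- No classical algorithm can solve Deutsch's problem with a single query: there do not exist t ∈ ℤ/2ℤ and a function g : ℤ/2ℤ → ℤ/2ℤ such that for all c₀, c₁ ∈ ℤ/2ℤ, g(c₀ + c₁·t) = c₁. That is, it is impossible to determine c₁ = f(0) + f(1) from the value of f at any single point, where f(t) = c₀ + c₁·t. -/
/-- No classical algorithm solves Deutsch's problem with a single query:
there is no query point `t` and postprocessing function `g` such that
`g(f(t)) = c₁` for every `f(t) = c₀ + c₁·t`. -/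
theorem no_classical_one_query_deutsch :
    ¬ ∃ (t : ZMod 2) (g : ZMod 2 → ZMod 2),
        ∀ c₀ c₁ : ZMod 2, g (c₀ + c₁ * t) = c₁ := by
  rintro ⟨t, g, h⟩
  have h1 := h 0 0
  have h2 := h (1 * t) 1
  simp at h1 h2
  rw [CharTwo.add_self_eq_zero, h1] at h2
  exact one_ne_zero h2.symm
end

section
/- Let F be a finite field with |F| ≥ 2n, let n ≥ 1, let x, y : Fin n → F be distinct coefficient vectors, and let p_x(T) = Σ_{i<n} x_i T^i, p_y(T) = Σ_{i<n} y_i T^i ∈ F[T]. Then for every k ≥ 1, the number of tuples (t₁, …, t_k) ∈ F^k such that p_x(t_i) = p_y(t_i) for all i ∈ {1, …, k} satisfies: (number of such tuples) · 2^k ≤ |F|^k. Equivalently, if t₁, …, t_k are chosen independently and uniformly at random from F, the probability that p_x and p_y agree at all k points is at most 2^{−k}. -/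
open Polynomial

/-- Error bound for the probabilistic equality protocol: over a finite field `F`
with `|F| ≥ 2n`, for distinct coefficient vectors `x ≠ y` of length `n`, the
number of `k`-tuples of evaluation points at which `p_x` and `p_y` agree at
every point is at most `|F|^k / 2^k`; i.e. the agreement probability for `k`
independent uniform points is at most `2^{−k}`. -/
theorem equality_protocol_error {F : Type*} [Field F] [Fintype F] [DecidableEq F]
    (n : ℕ) (hn : 1 ≤ n) (hF : 2 * n ≤ Fintype.card F)
    (x y : Fin n → F) (hxy : x ≠ y) (k : ℕ) (hk : 1 ≤ k) :
    (Finset.univ.filter fun t : Fin k → F =>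
        ∀ i : Fin k,
          (∑ j : Fin n, C (x j) * X ^ (j : ℕ)).eval (t i)
            = (∑ j : Fin n, C (y j) * X ^ (j : ℕ)).eval (t i)).card * 2 ^ k
      ≤ Fintype.card F ^ k := by
  set px : F[X] := ∑ j : Fin n, C (x j) * X ^ (j : ℕ) with hpx
  set py : F[X] := ∑ j : Fin n, C (y j) * X ^ (j : ℕ) with hpy
  set p : F[X] := px - py with hp
  -- p ≠ 0
  have hcoeff : ∀ (z : Fin n → F) (j : Fin n),
      (∑ i : Fin n, C (z i) * X ^ (i : ℕ)).coeff (j : ℕ) = z j := by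
    intro z j
    rw [Polynomial.finset_sum_coeff]
    rw [Finset.sum_eq_single j]
    · simp
    · intro b _ hb
      simp only [Polynomial.coeff_C_mul, Polynomial.coeff_X_pow]
      rw [if_neg (fun h => hb (Fin.ext h.symm)), mul_zero]
    · simp
  have hpne : p ≠ 0 := by
    obtain ⟨j, hj⟩ := Function.ne_iff.mp hxy
    intro h
    apply hj
    have := congrArg (fun q => q.coeff (j : ℕ)) h
    simp only [hp, Polynomial.coeff_sub, Polynomial.coeff_zero] at this
    rw [hpx, hpy] at this
    rw [hcoeff x j, hcoeff y j] at this
    exact sub_eq_zero.mp this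
  -- single-point agreement set
  set S : Finset F := Finset.univ.filter fun t => px.eval t = py.eval t with hS
  have hSsub : S ⊆ p.roots.toFinset := by
    intro t ht
    simp only [hS, Finset.mem_filter] at ht
    rw [Multiset.mem_toFinset, Polynomial.mem_roots hpne]
    simp [hp, Polynomial.IsRoot, ht.2]
  have hdeg : p.natDegree ≤ n - 1 := by
    have h1 : px.natDegree ≤ n - 1 := by
      apply Polynomial.natDegree_sum_le_of_forall_le
      intro j _
      calc (C (x j) * X ^ (j : ℕ)).natDegree ≤ (j : ℕ) := by
            apply le_trans (Polynomial.natDegree_mul_le)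
            simp [Polynomial.natDegree_X_pow]
        _ ≤ n - 1 := Nat.le_sub_one_of_lt j.isLt
    have h2 : py.natDegree ≤ n - 1 := by
      apply Polynomial.natDegree_sum_le_of_forall_le
      intro j _
      calc (C (y j) * X ^ (j : ℕ)).natDegree ≤ (j : ℕ) := by
            apply le_trans (Polynomial.natDegree_mul_le)
            simp [Polynomial.natDegree_X_pow]
        _ ≤ n - 1 := Nat.le_sub_one_of_lt j.isLt
    exact le_trans (Polynomial.natDegree_sub_le _ _) (max_le h1 h2)
  have hScard : S.card ≤ n := by
    calc S.card ≤ p.roots.toFinset.card := Finset.card_le_card hSsub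
      _ ≤ Multiset.card p.roots := Multiset.toFinset_card_le _
      _ ≤ p.natDegree := Polynomial.card_roots' p
      _ ≤ n - 1 := hdeg
      _ ≤ n := Nat.sub_le n 1
  have hS2 : S.card * 2 ≤ Fintype.card F := by
    calc S.card * 2 ≤ n * 2 := Nat.mul_le_mul_right 2 hScard
      _ = 2 * n := Nat.mul_comm n 2
      _ ≤ Fintype.card F := hF
  -- tuple set equals pi of S
  have hfilter : (Finset.univ.filter fun t : Fin k → F =>
      ∀ i : Fin k, px.eval (t i) = py.eval (t i))
      = Fintype.piFinset (fun _ : Fin k => S) := by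
    ext t
    simp [hS, Fintype.mem_piFinset]
  rw [hfilter]
  rw [Fintype.card_piFinset]
  calc (∏ _i : Fin k, S.card) * 2 ^ k = S.card ^ k * 2 ^ k := by
        rw [Finset.prod_const, Finset.card_univ, Fintype.card_fin]
    _ = (S.card * 2) ^ k := (mul_pow _ _ _).symm
    _ ≤ Fintype.card F ^ k := Nat.pow_le_pow_left hS2 k
end
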